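/- Let e₁,…,e₇ be a basis of the complex vector space ℂ⁷ and work in its exterior algebra. Let x = e₁∧e₄ + e₂∧e₅ + e₃∧e₆ ∈ ⋀²ℂ⁷. Then for a vector v ∈ ℂ⁷, one has v∧x∧x∧x = 0 if and only if v lies in the linear span of e₁,…,e₆. -/

import Mathlib

open ExteriorAlgebra

private lemma stmt8_cube {R : Type*} [Ring R] (A B C : R) (hA : A*A = 0) (hB : B*B = 0)
    (hC : C*C = 0) (hAB : B*A = A*B) (hAC : C*A = A*C) (hBC : C*B = B*C) :
    (A+B+C)*(A+B+C)*(A+B+C) = 6 • (A*(B*C)) := by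
  have hA' : ∀ x : R, A*(A*x) = 0 := fun x => by rw [← mul_assoc, hA, zero_mul]
  have hB' : ∀ x : R, B*(B*x) = 0 := fun x => by rw [← mul_assoc, hB, zero_mul]
  have hC' : ∀ x : R, C*(C*x) = 0 := fun x => by rw [← mul_assoc, hC, zero_mul]
  have hAB' : ∀ x : R, B*(A*x) = A*(B*x) := fun x => by rw [← mul_assoc, hAB, mul_assoc]
  have hAC' : ∀ x : R, C*(A*x) = A*(C*x) := fun x => by rw [← mul_assoc, hAC, mul_assoc]
  have hBC' : ∀ x : R, C*(B*x) = B*(C*x) := fun x => by rw [← mul_assoc, hBC, mul_assoc]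
  simp only [add_mul, mul_add, mul_assoc, hA, hB, hC, hA', hB', hC', hAB, hAC, hBC,
    hAB', hAC', hBC', zero_mul, mul_zero, add_zero, zero_add]
  abel

private lemma stmt8_prod7 (m : Fin 7 → (Fin 7 → ℂ)) :
    ι ℂ (m 0) * (ι ℂ (m 1) * (ι ℂ (m 2) * (ι ℂ (m 3) * (ι ℂ (m 4) * (ι ℂ (m 5) * ι ℂ (m 6))))))
      = ιMulti ℂ 7 m := by
  simp [ιMulti_apply, List.ofFn_succ, Matrix.vecTail, Function.comp]

private lemma stmt8_prod4 (m : Fin 4 → (Fin 7 → ℂ)) :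
    ι ℂ (m 0) * (ι ℂ (m 1) * (ι ℂ (m 2) * ι ℂ (m 3))) = ιMulti ℂ 4 m := by
  simp [ιMulti_apply, List.ofFn_succ, Matrix.vecTail, Function.comp]

private lemma stmt8_sq0 (p q : Fin 7 → ℂ) : (ι ℂ p * ι ℂ q) * (ι ℂ p * ι ℂ q) = 0 := by
  have h : ι ℂ p * (ι ℂ q * (ι ℂ p * ι ℂ q)) = ιMulti ℂ 4 ![p, q, p, q] := by
    rw [← stmt8_prod4]; rfl
  rw [mul_assoc, h]
  exact AlternatingMap.map_eq_zero_of_eq _ (i := 0) (j := 2) _ (by rfl) (by decide)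

private def stmt8_perm4 : Equiv.Perm (Fin 4) :=
  ⟨![2, 3, 0, 1], ![2, 3, 0, 1], by decide, by decide⟩

private lemma stmt8_comm (p q r s : Fin 7 → ℂ) :
    (ι ℂ r * ι ℂ s) * (ι ℂ p * ι ℂ q) = (ι ℂ p * ι ℂ q) * (ι ℂ r * ι ℂ s) := by
  have h1 : ι ℂ r * (ι ℂ s * (ι ℂ p * ι ℂ q)) = ιMulti ℂ 4 ![r, s, p, q] := by
    rw [← stmt8_prod4]; rfl
  have h2 : ι ℂ p * (ι ℂ q * (ι ℂ r * ι ℂ s)) = ιMulti ℂ 4 ![p, q, r, s] := by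
    rw [← stmt8_prod4]; rfl
  have h3 : ιMulti ℂ 4 ![r, s, p, q] = ιMulti ℂ 4 ![p, q, r, s] := by
    have hp := AlternatingMap.map_perm (ιMulti ℂ 4) ![p, q, r, s] stmt8_perm4
    have hfun : ![p, q, r, s] ∘ stmt8_perm4 = ![r, s, p, q] := by
      funext j; fin_cases j <;> rfl
    rw [hfun] at hp
    rw [hp, show Equiv.Perm.sign stmt8_perm4 = 1 by decide, one_smul]
  rw [mul_assoc, h1, h3, ← h2, mul_assoc]

private def stmt8_perm7 : Equiv.Perm (Fin 7) :=
  ⟨![6, 0, 3, 1, 4, 2, 5], ![1, 3, 5, 2, 4, 6, 0], by decide, by decide⟩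

private lemma stmt8_exF (c : Module.Basis (Fin 7) ℂ (Fin 7 → ℂ)) :
    ∃ F : ExteriorAlgebra ℂ (Fin 7 → ℂ) →ₗ[ℂ] ℂ,
      ∀ g : Fin 7 → (Fin 7 → ℂ), F (ιMulti ℂ 7 g) = c.det g := by
  let f : ∀ i : ℕ, (Fin 7 → ℂ) [⋀^Fin i]→ₗ[ℂ] ℂ :=
    Function.update (fun i => (0 : (Fin 7 → ℂ) [⋀^Fin i]→ₗ[ℂ] ℂ)) 7 c.det
  refine ⟨liftAlternating f, fun g => ?_⟩
  rw [liftAlternating_apply_ιMulti]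
  show f 7 g = c.det g
  rw [show f 7 = c.det from
    Function.update_self (β := fun i : ℕ => (Fin 7 → ℂ) [⋀^Fin i]→ₗ[ℂ] ℂ) 7 c.det _]

private lemma stmt8_key (b : Module.Basis (Fin 7) ℂ (Fin 7 → ℂ)) (u : Fin 7 → ℂ)
    (h : ιMulti ℂ 7 ![u, b 0, b 3, b 1, b 4, b 2, b 5] = 0) : b.repr u 6 = 0 := by
  set σ : Equiv.Perm (Fin 7) := stmt8_perm7 with hσ
  set c : Module.Basis (Fin 7) ℂ (Fin 7 → ℂ) := b.reindex σ.symm with hcdef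
  have hc : ∀ j, c j = b (σ j) := fun j => by rw [hcdef, Module.Basis.reindex_apply, Equiv.symm_symm]
  set g : Fin 7 → (Fin 7 → ℂ) := fun j => if j = 0 then u else c j with hgdef
  have hfam : (![u, b 0, b 3, b 1, b 4, b 2, b 5] : Fin 7 → (Fin 7 → ℂ)) = g := by
    funext j
    fin_cases j <;> simp [hgdef, hc, hσ, stmt8_perm7] <;> rfl
  obtain ⟨F, hF⟩ := stmt8_exF c
  have key : c.det g = b.repr u 6 := by
    have hM : c.toMatrix g
        = (1 : Matrix (Fin 7) (Fin 7) ℂ).updateCol 0 (c.repr u) := by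
      ext i j
      fin_cases j <;>
        simp [hgdef, Module.Basis.toMatrix_apply, Matrix.updateCol_apply, Module.Basis.repr_self,
          Matrix.one_apply, Finsupp.single_apply, eq_comm]
    rw [Module.Basis.det_apply, hM, ← Matrix.cramer_apply, Matrix.cramer_one]
    have h0 : c.repr u 0 = b.repr u (σ 0) := by
      rw [hcdef, Module.Basis.repr_reindex_apply, Equiv.symm_symm]
    have hσ0 : σ 0 = 6 := by rw [hσ]; rfl
    rw [show ((1 : (Fin 7 → ℂ) →ₗ[ℂ] (Fin 7 → ℂ)) (c.repr u)) 0 = c.repr u 0 from rfl,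
      h0, hσ0]
  rw [← key, ← hfam, ← hF, h, map_zero]

private lemma stmt8_gen_zero (b : Module.Basis (Fin 7) ℂ (Fin 7 → ℂ)) :
    ∀ u ∈ ({b 0, b 1, b 2, b 3, b 4, b 5} : Set (Fin 7 → ℂ)),
      ιMulti ℂ 7 ![u, b 0, b 3, b 1, b 4, b 2, b 5] = 0 := by
  rintro u (rfl | rfl | rfl | rfl | rfl | rfl)
  · exact AlternatingMap.map_eq_zero_of_eq _ (i := 0) (j := 1) _ (by rfl) (by decide)
  · exact AlternatingMap.map_eq_zero_of_eq _ (i := 0) (j := 3) _ (by rfl) (by decide)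
  · exact AlternatingMap.map_eq_zero_of_eq _ (i := 0) (j := 5) _ (by rfl) (by decide)
  · exact AlternatingMap.map_eq_zero_of_eq _ (i := 0) (j := 2) _ (by rfl) (by decide)
  · exact AlternatingMap.map_eq_zero_of_eq _ (i := 0) (j := 4) _ (by rfl) (by decide)
  · exact AlternatingMap.map_eq_zero_of_eq _ (i := 0) (j := 6) _ (by rfl) (by decide)

private lemma stmt8_span_zero (b : Module.Basis (Fin 7) ℂ (Fin 7 → ℂ)) (u : Fin 7 → ℂ)
    (hu : u ∈ Submodule.span ℂ ({b 0, b 1, b 2, b 3, b 4, b 5} : Set (Fin 7 → ℂ))) :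
    ιMulti ℂ 7 ![u, b 0, b 3, b 1, b 4, b 2, b 5] = 0 := by
  let r : Fin 6 → (Fin 7 → ℂ) := ![b 0, b 3, b 1, b 4, b 2, b 5]
  let L : (Fin 7 → ℂ) →ₗ[ℂ] ExteriorAlgebra ℂ (Fin 7 → ℂ) :=
    { toFun := fun u => ιMulti ℂ 7 (Matrix.vecCons u r)
      map_add' := fun u u' => MultilinearMap.cons_add _ _ _ _
      map_smul' := fun t u => MultilinearMap.cons_smul _ _ _ _ }
  have hL : ∀ z, ιMulti ℂ 7 ![z, b 0, b 3, b 1, b 4, b 2, b 5] = L z := fun z => rfl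
  rw [hL u]
  have hle : Submodule.span ℂ ({b 0, b 1, b 2, b 3, b 4, b 5} : Set (Fin 7 → ℂ))
      ≤ LinearMap.ker L := by
    rw [Submodule.span_le]
    intro z hz
    rw [SetLike.mem_coe, LinearMap.mem_ker, ← hL z]
    exact stmt8_gen_zero b z hz
  exact hle hu

private lemma stmt8_cancel6 (z : ExteriorAlgebra ℂ (Fin 7 → ℂ)) (h : (6 : ℂ) • z = 0) :
    z = 0 := by
  have h' := congrArg (fun t => (6 : ℂ)⁻¹ • t) h
  simpa [smul_smul, show ((6 : ℂ)⁻¹ * 6) = 1 by norm_num] using h'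

private lemma stmt8_mem_span (b : Module.Basis (Fin 7) ℂ (Fin 7 → ℂ)) (v : Fin 7 → ℂ)
    (hz : b.repr v 6 = 0) :
    v ∈ Submodule.span ℂ ({b 0, b 1, b 2, b 3, b 4, b 5} : Set (Fin 7 → ℂ)) := by
  have himg : ({b 0, b 1, b 2, b 3, b 4, b 5} : Set (Fin 7 → ℂ))
      = b '' ({0, 1, 2, 3, 4, 5} : Set (Fin 7)) := by
    simp [Set.image_insert_eq]
  rw [himg, Module.Basis.mem_span_image]
  intro i hi
  simp at hi
  fin_cases i <;> simp_all

/-- For a basis `e₁,…,e₇` of `ℂ⁷` and `x = e₁∧e₄ + e₂∧e₅ + e₃∧e₆ ∈ ⋀²ℂ⁷`, a vector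
`v ∈ ℂ⁷` satisfies `v∧x∧x∧x = 0` if and only if `v` lies in the span of `e₁,…,e₆`. -/
theorem stmt_8 (b : Module.Basis (Fin 7) ℂ (Fin 7 → ℂ)) (v : Fin 7 → ℂ) :
    let e : Fin 7 → ExteriorAlgebra ℂ (Fin 7 → ℂ) := fun i => ι ℂ (b i)
    let x : ExteriorAlgebra ℂ (Fin 7 → ℂ) := e 0 * e 3 + e 1 * e 4 + e 2 * e 5
    (ι ℂ v * x * x * x = 0 ↔
      v ∈ Submodule.span ℂ ({b 0, b 1, b 2, b 3, b 4, b 5} : Set (Fin 7 → ℂ))) := by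
  intro e x
  set w : ExteriorAlgebra ℂ (Fin 7 → ℂ) :=
    (e 0 * e 3) * ((e 1 * e 4) * (e 2 * e 5)) with hw
  have hx3 : x * x * x = 6 • w :=
    stmt8_cube _ _ _ (stmt8_sq0 _ _) (stmt8_sq0 _ _) (stmt8_sq0 _ _)
      (stmt8_comm _ _ _ _) (stmt8_comm _ _ _ _) (stmt8_comm _ _ _ _)
  have hmain : ι ℂ v * x * x * x = (6 : ℂ) • ιMulti ℂ 7 ![v, b 0, b 3, b 1, b 4, b 2, b 5] := by
    have h1 : ι ℂ v * x * x * x = ι ℂ v * (x * x * x) := by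
      rw [mul_assoc, mul_assoc, mul_assoc]
    have h2 : ι ℂ v * w = ιMulti ℂ 7 ![v, b 0, b 3, b 1, b 4, b 2, b 5] := by
      rw [← stmt8_prod7]
      show ι ℂ v * ((ι ℂ (b 0) * ι ℂ (b 3)) * ((ι ℂ (b 1) * ι ℂ (b 4)) * (ι ℂ (b 2) * ι ℂ (b 5)))) = _
      simp only [mul_assoc]
      rfl
    rw [h1, hx3, mul_smul_comm, h2, ← Nat.cast_smul_eq_nsmul ℂ 6]
    norm_num
  rw [hmain]
  constructor
  · intro h
    exact stmt8_mem_span b v (stmt8_key b v (stmt8_cancel6 _ h))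
  · intro hv
    rw [stmt8_span_zero b v hv, smul_zero]
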